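/- (Non-convex SGD rate under SGC) If f is L-smooth, bounded below by f*, and satisfies the strong growth condition E_z‖∇f(w,z)‖² ≤ ρ‖∇f(w)‖² (σ = 0), then t iterations of constant step-size SGD with η = 1/(ρL) give min_{k=0,…,t−1} E‖∇f(w_k)‖² ≤ (2ρL/t)[f(w₀) − f*]. -/

import Mathlib

open scoped RealInnerProductSpace
open Finset

section Descent
variable {E : Type*} [NormedAddCommGroup E] [InnerProductSpace ℝ E] [CompleteSpace E]

lemma descent_lemma {f : E → ℝ} {f' : E → E} {L : ℝ} (hL : 0 ≤ L)
    (hgrad : ∀ v, HasGradientAt f (f' v) v)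
    (hlip : LipschitzWith (Real.toNNReal L) f') (x y : E) :
    f y ≤ f x + ⟪f' x, y - x⟫ + L / 2 * ‖y - x‖ ^ 2 := by
  set d := y - x with hd
  have hcont : Continuous f' := hlip.continuous
  have hline : ∀ s : ℝ, HasDerivAt (fun s : ℝ => f (x + s • d)) ⟪f' (x + s • d), d⟫ s := by
    intro s
    have h1 : HasDerivAt (fun s : ℝ => x + s • d) d s := by
      simpa using ((hasDerivAt_id s).smul_const d).const_add x
    have h2 := (hgrad (x + s • d)).hasFDerivAt.comp_hasDerivAt s h1
    simp [InnerProductSpace.toDual_apply_apply] at h2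
    exact h2
  have hcontint : Continuous (fun s : ℝ => ⟪f' (x + s • d), d⟫) := by
    exact (hcont.comp (by continuity)).inner continuous_const
  have key : ∫ s in (0:ℝ)..1, ⟪f' (x + s • d), d⟫ = f y - f x := by
    have := intervalIntegral.integral_eq_sub_of_hasDerivAt
      (f := fun s : ℝ => f (x + s • d)) (f' := fun s => ⟪f' (x + s • d), d⟫)
      (a := 0) (b := 1) (fun s _ => hline s) (hcontint.intervalIntegrable 0 1)
    simpa [hd] using this
  have hbound : ∀ s ∈ Set.Icc (0:ℝ) 1,
      ⟪f' (x + s • d), d⟫ ≤ ⟪f' x, d⟫ + L * s * ‖d‖ ^ 2 := by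
    intro s hs
    have h1 : ⟪f' (x + s • d) - f' x, d⟫ ≤ ‖f' (x + s • d) - f' x‖ * ‖d‖ :=
      real_inner_le_norm _ _
    have h2 : ‖f' (x + s • d) - f' x‖ ≤ L * (s * ‖d‖) := by
      have hdd : dist (x + s • d) x = ‖s • d‖ := by
        rw [dist_eq_norm]; simp
      calc ‖f' (x + s • d) - f' x‖ = dist (f' (x + s • d)) (f' x) := (dist_eq_norm _ _).symm
        _ ≤ (Real.toNNReal L : ℝ) * ‖s • d‖ := by
            simpa [hdd] using hlip.dist_le_mul (x + s • d) x
        _ = L * (|s| * ‖d‖) := by rw [Real.coe_toNNReal L hL, norm_smul]; simp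
        _ = L * (s * ‖d‖) := by rw [abs_of_nonneg hs.1]
    have h3 : ⟪f' (x + s • d) - f' x, d⟫ ≤ L * s * ‖d‖ ^ 2 := by
      calc ⟪f' (x + s • d) - f' x, d⟫ ≤ ‖f' (x + s • d) - f' x‖ * ‖d‖ := h1
        _ ≤ L * (s * ‖d‖) * ‖d‖ := by
            apply mul_le_mul_of_nonneg_right h2 (norm_nonneg d)
        _ = L * s * ‖d‖ ^ 2 := by ring
    have := inner_sub_left (𝕜 := ℝ) (f' (x + s • d)) (f' x) d
    linarith [h3, this.symm ▸ h3]
  have hmono : ∫ s in (0:ℝ)..1, ⟪f' (x + s • d), d⟫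
      ≤ ∫ s in (0:ℝ)..1, (⟪f' x, d⟫ + L * s * ‖d‖ ^ 2) := by
    apply intervalIntegral.integral_mono_on zero_le_one
      (hcontint.intervalIntegrable 0 1)
      ((by continuity : Continuous fun s : ℝ => ⟪f' x, d⟫ + L * s * ‖d‖ ^ 2).intervalIntegrable 0 1)
    intro s hs
    exact hbound s hs
  have hval : ∫ s in (0:ℝ)..1, (⟪f' x, d⟫ + L * s * ‖d‖ ^ 2)
      = ⟪f' x, d⟫ + L / 2 * ‖d‖ ^ 2 := by
    rw [intervalIntegral.integral_add (f := fun _ => ⟪f' x, d⟫) (g := fun s => L * s * ‖d‖ ^ 2) (intervalIntegrable_const)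
      (((continuous_const.mul continuous_id').mul continuous_const : Continuous fun s : ℝ => L * s * ‖d‖ ^ 2).intervalIntegrable 0 1)]
    simp only [intervalIntegral.integral_const, smul_eq_mul]
    have : ∫ s in (0:ℝ)..1, L * s * ‖d‖ ^ 2 = L / 2 * ‖d‖ ^ 2 := by
      have : (fun s : ℝ => L * s * ‖d‖ ^ 2) = fun s : ℝ => (L * ‖d‖ ^ 2) * s := by
        funext s; ring
      rw [this, intervalIntegral.integral_const_mul, integral_id]
      ring
    rw [this]; ring
  nlinarith [key ▸ hmono, hval ▸ hmono]

end Descent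

/-- Expectation over the first `k` steps of uniform i.i.d. noise in `Fin n`. -/
noncomputable def ExpN (n k : ℕ) (hn : 0 < n) (h : (ℕ → Fin n) → ℝ) : ℝ :=
  (∑ σ : Fin k → Fin n, h (fun i => if hi : i < k then σ ⟨i, hi⟩ else ⟨0, hn⟩)) / (n : ℝ) ^ k

/-- Non-convex SGD rate under the strong growth condition:
with `η = 1/(ρL)`, after `t` iterations
`min_{k<t} E‖∇f(w_k)‖² ≤ (2ρL/t)(f(w₀) − f*)`. -/
theorem sgd_nonconvex_rate_sgc
    (d n : ℕ) (hn : 0 < n)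
    (f : EuclideanSpace ℝ (Fin d) → ℝ)
    (f' : EuclideanSpace ℝ (Fin d) → EuclideanSpace ℝ (Fin d))
    (G : EuclideanSpace ℝ (Fin d) → Fin n → EuclideanSpace ℝ (Fin d))
    (ρ L fstar η : ℝ) (w0 : EuclideanSpace ℝ (Fin d))
    (W : (ℕ → Fin n) → ℕ → EuclideanSpace ℝ (Fin d))
    (hL : 0 < L) (hρ : 0 < ρ)
    (hgrad : ∀ v, HasGradientAt f (f' v) v)
    (hlip : LipschitzWith (Real.toNNReal L) f')
    (hbelow : ∀ v, fstar ≤ f v)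
    (hunbiased : ∀ v, (1 / (n : ℝ)) • ∑ z, G v z = f' v)
    (hsgc : ∀ v, (1 / (n : ℝ)) * ∑ z, ‖G v z‖ ^ 2 ≤ ρ * ‖f' v‖ ^ 2)
    (hη : η = 1 / (ρ * L))
    (hW0 : ∀ ω, W ω 0 = w0)
    (hWs : ∀ ω k, W ω (k + 1) = W ω k - η • G (W ω k) (ω k))
    (t : ℕ) (ht : 0 < t) :
    ∃ k < t, ExpN n k hn (fun ω => ‖f' (W ω k)‖ ^ 2)
      ≤ (2 * ρ * L / t) * (f w0 - fstar) := by
  have hnR : (0:ℝ) < n := by exact_mod_cast hn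
  have hηρL : η * (ρ * L) = 1 := by
    rw [hη]; field_simp
  have hηpos : 0 < η := by rw [hη]; positivity
  -- one-step expected descent
  have step : ∀ u : EuclideanSpace ℝ (Fin d),
      (∑ z, f (u - η • G u z)) ≤ (n : ℝ) * (f u - η / 2 * ‖f' u‖ ^ 2) := by
    intro u
    have h1 : ∀ z : Fin n, f (u - η • G u z) ≤
        f u - η * ⟪f' u, G u z⟫ + L * η ^ 2 / 2 * ‖G u z‖ ^ 2 := by
      intro z
      have hdesc := descent_lemma hL.le hgrad hlip u (u - η • G u z)
      have e1 : (u - η • G u z) - u = -(η • G u z) := by abel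
      rw [e1] at hdesc
      have e2 : ⟪f' u, -(η • G u z)⟫ = -(η * ⟪f' u, G u z⟫) := by
        rw [inner_neg_right, real_inner_smul_right]
      have e3 : ‖-(η • G u z)‖ ^ 2 = η ^ 2 * ‖G u z‖ ^ 2 := by
        rw [norm_neg, norm_smul]
        simp [mul_pow, sq_abs]
      rw [e2, e3] at hdesc
      linarith [hdesc]
    have hsum := Finset.sum_le_sum (fun z (_ : z ∈ Finset.univ) => h1 z)
    have hS1 : ∑ z, ⟪f' u, G u z⟫ = (n : ℝ) * ‖f' u‖ ^ 2 := by
      rw [← inner_sum]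
      have : (∑ z, G u z) = (n : ℝ) • f' u := by
        have := hunbiased u
        rw [← this, smul_smul]
        rw [mul_one_div, div_self hnR.ne', one_smul]
      rw [this, real_inner_smul_right, real_inner_self_eq_norm_sq]
    have hS2 : ∑ z, ‖G u z‖ ^ 2 ≤ (n : ℝ) * (ρ * ‖f' u‖ ^ 2) := by
      have := hsgc u
      have h2 := mul_le_mul_of_nonneg_left this hnR.le
      calc ∑ z, ‖G u z‖ ^ 2 = (n : ℝ) * ((1 / (n : ℝ)) * ∑ z, ‖G u z‖ ^ 2) := by
            field_simp
        _ ≤ (n : ℝ) * (ρ * ‖f' u‖ ^ 2) := h2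
    have hRHS : ∑ z : Fin n, (f u - η * ⟪f' u, G u z⟫ + L * η ^ 2 / 2 * ‖G u z‖ ^ 2)
        = (n : ℝ) * f u - η * ((n:ℝ) * ‖f' u‖^2) + L * η ^ 2 / 2 * ∑ z, ‖G u z‖ ^ 2 := by
      rw [Finset.sum_add_distrib, Finset.sum_sub_distrib, Finset.sum_const,
        ← Finset.mul_sum, ← Finset.mul_sum, hS1]
      simp [Finset.card_univ, mul_comm]
    have hL2 : L * η ^ 2 / 2 * ∑ z, ‖G u z‖ ^ 2 ≤ L * η ^ 2 / 2 * ((n:ℝ) * (ρ * ‖f' u‖ ^ 2)) := by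
      apply mul_le_mul_of_nonneg_left hS2 (by positivity)
    have : ∑ z, f (u - η • G u z) ≤
        (n : ℝ) * f u - η * ((n:ℝ) * ‖f' u‖^2) + L * η ^ 2 / 2 * ((n:ℝ) * (ρ * ‖f' u‖ ^ 2)) := by
      calc ∑ z, f (u - η • G u z)
          ≤ ∑ z : Fin n, (f u - η * ⟪f' u, G u z⟫ + L * η ^ 2 / 2 * ‖G u z‖ ^ 2) := hsum
        _ = _ := hRHS
        _ ≤ _ := by linarith [hL2]
    have hLηρ : L * η * ρ = 1 := by nlinarith [hηρL]
    have hkey : L * η ^ 2 / 2 * ((n:ℝ) * (ρ * ‖f' u‖ ^ 2)) = η / 2 * ((n:ℝ) * ‖f' u‖ ^ 2) := by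
      calc L * η ^ 2 / 2 * ((n:ℝ) * (ρ * ‖f' u‖ ^ 2))
          = (L * η * ρ) * (η / 2 * ((n:ℝ) * ‖f' u‖ ^ 2)) := by ring
        _ = η / 2 * ((n:ℝ) * ‖f' u‖ ^ 2) := by rw [hLηρ]; ring
    nlinarith [this, hkey]
  -- extension of finite noise to infinite
  set ext : ∀ k : ℕ, (Fin k → Fin n) → (ℕ → Fin n) :=
    fun k σ i => if hi : i < k then σ ⟨i, hi⟩ else ⟨0, hn⟩ with hext
  -- W depends only on the first k noises
  have hWdet : ∀ k (ω ω' : ℕ → Fin n), (∀ i, i < k → ω i = ω' i) → W ω k = W ω' k := by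
    intro k
    induction k with
    | zero => intro ω ω' _; rw [hW0, hW0]
    | succ k ih =>
      intro ω ω' h
      rw [hWs, hWs, ih ω ω' (fun i hi => h i (Nat.lt_succ_of_lt hi)), h k (Nat.lt_succ_self k)]
  set A : ℕ → ℝ := fun k => ExpN n k hn (fun ω => f (W ω k)) with hA
  set B : ℕ → ℝ := fun k => ExpN n k hn (fun ω => ‖f' (W ω k)‖ ^ 2) with hB
  -- key recursion
  have hrec : ∀ k, A (k + 1) ≤ A k - η / 2 * B k := by
    intro k
    have hsplit : ∀ h : (Fin (k+1) → Fin n) → ℝ,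
        ∑ τ : Fin (k+1) → Fin n, h τ = ∑ σ : Fin k → Fin n, ∑ z : Fin n, h (Fin.snoc σ z) := by
      intro h
      rw [← Equiv.sum_comp (Fin.snocEquiv (fun _ => Fin n)) h, Fintype.sum_prod_type]
      rw [Finset.sum_comm]
      rfl
    have hWsnoc : ∀ (σ : Fin k → Fin n) (z : Fin n),
        W (ext (k+1) (Fin.snoc σ z)) (k+1)
          = W (ext k σ) k - η • G (W (ext k σ) k) z := by
      intro σ z
      rw [hWs]
      have h1 : W (ext (k+1) (Fin.snoc σ z)) k = W (ext k σ) k := by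
        apply hWdet
        intro i hi
        simp only [hext]
        rw [dif_pos (Nat.lt_succ_of_lt hi), dif_pos hi]
        have : (⟨i, Nat.lt_succ_of_lt hi⟩ : Fin (k+1)) = Fin.castSucc ⟨i, hi⟩ := rfl
        rw [this, Fin.snoc_castSucc]
      have h2 : ext (k+1) (Fin.snoc σ z) k = z := by
        simp only [hext]
        rw [dif_pos (Nat.lt_succ_self k)]
        have : (⟨k, Nat.lt_succ_self k⟩ : Fin (k+1)) = Fin.last k := rfl
        rw [this, Fin.snoc_last]
      rw [h1, h2]
    have expand : A (k+1) = (∑ σ : Fin k → Fin n, ∑ z : Fin n,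
        f (W (ext k σ) k - η • G (W (ext k σ) k) z)) / (n:ℝ) ^ (k+1) := by
      simp only [hA, ExpN]
      congr 1
      rw [hsplit (fun τ => f (W (ext (k+1) τ) (k+1)))]
      apply Finset.sum_congr rfl
      intro σ _
      apply Finset.sum_congr rfl
      intro z _
      rw [hWsnoc σ z]
    have hsumle : (∑ σ : Fin k → Fin n, ∑ z : Fin n,
        f (W (ext k σ) k - η • G (W (ext k σ) k) z))
        ≤ ∑ σ : Fin k → Fin n, (n:ℝ) * (f (W (ext k σ) k) - η / 2 * ‖f' (W (ext k σ) k)‖ ^ 2) := by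
      apply Finset.sum_le_sum
      intro σ _
      exact step (W (ext k σ) k)
    have hAk : A k = (∑ σ : Fin k → Fin n, f (W (ext k σ) k)) / (n:ℝ) ^ k := rfl
    have hBk : B k = (∑ σ : Fin k → Fin n, ‖f' (W (ext k σ) k)‖ ^ 2) / (n:ℝ) ^ k := rfl
    rw [expand, hAk, hBk]
    rw [div_le_iff₀ (by positivity), pow_succ]
    have hne : ((n:ℝ) ^ k) ≠ 0 := by positivity
    calc (∑ σ : Fin k → Fin n, ∑ z : Fin n,
        f (W (ext k σ) k - η • G (W (ext k σ) k) z))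
        ≤ ∑ σ : Fin k → Fin n, (n:ℝ) * (f (W (ext k σ) k) - η / 2 * ‖f' (W (ext k σ) k)‖ ^ 2) :=
          hsumle
      _ = ((∑ σ : Fin k → Fin n, f (W (ext k σ) k)) / (n:ℝ)^k
            - η / 2 * ((∑ σ : Fin k → Fin n, ‖f' (W (ext k σ) k)‖ ^ 2) / (n:ℝ)^k))
            * ((n:ℝ)^k * (n:ℝ)) := by
          rw [← Finset.mul_sum, Finset.sum_sub_distrib, ← Finset.mul_sum]
          field_simp
  -- telescoping
  have htel : ∀ m : ℕ, A m + η / 2 * ∑ k ∈ Finset.range m, B k ≤ A 0 := by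
    intro m
    induction m with
    | zero => simp
    | succ m ih =>
      have := hrec m
      rw [Finset.sum_range_succ]
      linarith
  have hA0 : A 0 = f w0 := by
    simp only [hA, ExpN, pow_zero, div_one]
    rw [Finset.sum_congr rfl (fun σ _ => by rw [hW0])]
    simp
  have hAt : fstar ≤ A t := by
    have hcard : (Finset.univ : Finset (Fin t → Fin n)).card = n ^ t := by
      simp [Fintype.card_fun]
    have hle : (n:ℝ)^t * fstar ≤ ∑ σ : Fin t → Fin n, f (W (ext t σ) t) := by
      calc (n:ℝ)^t * fstar = ∑ _σ : Fin t → Fin n, fstar := by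
            rw [Finset.sum_const, hcard]; push_cast; ring
        _ ≤ _ := Finset.sum_le_sum (fun σ _ => hbelow _)
    have : A t = (∑ σ : Fin t → Fin n, f (W (ext t σ) t)) / (n:ℝ) ^ t := rfl
    rw [this, le_div_iff₀ (by positivity)]
    linarith [hle]
  have hBnonneg : ∀ k, 0 ≤ B k := by
    intro k
    have : B k = (∑ σ : Fin k → Fin n, ‖f' (W (ext k σ) k)‖ ^ 2) / (n:ℝ) ^ k := rfl
    rw [this]
    positivity
  have hsumB : η / 2 * ∑ k ∈ Finset.range t, B k ≤ f w0 - fstar := by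
    have := htel t
    rw [hA0] at this
    linarith
  -- pick the argmin
  obtain ⟨k, hkmem, hkmin⟩ := Finset.exists_min_image (Finset.range t) B ⟨0, Finset.mem_range.2 ht⟩
  refine ⟨k, Finset.mem_range.1 hkmem, ?_⟩
  have htR : (0:ℝ) < t := by exact_mod_cast ht
  have hcardsum : (t : ℝ) * B k ≤ ∑ j ∈ Finset.range t, B j := by
    have := Finset.card_nsmul_le_sum (Finset.range t) B (B k) (fun j hj => hkmin j hj)
    simpa [nsmul_eq_mul, Finset.card_range] using this
  have hsum2 : ∑ j ∈ Finset.range t, B j ≤ 2 * ρ * L * (f w0 - fstar) := by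
    have h2 : (2:ℝ) * ρ * L = 2 / η := by rw [hη]; field_simp
    rw [h2, div_mul_eq_mul_div, le_div_iff₀ hηpos]
    linarith [hsumB]
  have h1 : (t:ℝ) * B k ≤ 2 * ρ * L * (f w0 - fstar) := le_trans hcardsum hsum2
  rw [div_mul_eq_mul_div, le_div_iff₀ htR]
  linarith [h1]
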